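/- Let ψ : ℕ → [0,∞) be non-increasing. Then there is an absolute constant C such that for all Q ≥ 1 and m ≥ 1, ∑_{q=1}^{Q} ψ(q)^m ≤ C^m ∑_{q=1}^{Q} (φ(q) ψ(q)/q)^m. -/

import Mathlib

open Finset

/-- sum of reciprocals of prime factors -/
noncomputable def sfun (q : ℕ) : ℝ := ∑ p ∈ q.primeFactors, (p : ℝ)⁻¹

lemma sfun_nonneg (q : ℕ) : 0 ≤ sfun q :=
  Finset.sum_nonneg fun p _ => by positivity

/-- Weierstrass product inequality -/
lemma weier (s : Finset ℕ) (f : ℕ → ℝ) (h0 : ∀ i ∈ s, 0 ≤ f i) (h1 : ∀ i ∈ s, f i ≤ 1) :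
    1 - ∑ i ∈ s, f i ≤ ∏ i ∈ s, (1 - f i) := by
  classical
  induction s using Finset.induction_on with
  | empty => simp
  | @insert a s ha ih =>
    rw [Finset.sum_insert ha, Finset.prod_insert ha]
    have h0a : 0 ≤ f a := h0 a (mem_insert_self a s)
    have h1a : f a ≤ 1 := h1 a (mem_insert_self a s)
    have ih' := ih (fun i hi => h0 i (mem_insert_of_mem hi))
      (fun i hi => h1 i (mem_insert_of_mem hi))
    have hs : 0 ≤ ∑ i ∈ s, f i := Finset.sum_nonneg fun i hi => h0 i (mem_insert_of_mem hi)
    nlinarith [mul_le_mul_of_nonneg_left ih' (by linarith : (0:ℝ) ≤ 1 - f a)]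

lemma totient_lb (q : ℕ) : (1 - sfun q) * q ≤ (Nat.totient q : ℝ) := by
  rcases Nat.eq_zero_or_pos q with rfl | hq
  · simp [sfun]
  have h := Nat.totient_eq_mul_prod_factors q
  have h' : (q.totient : ℝ) = q * ∏ p ∈ q.primeFactors, (1 - (p : ℝ)⁻¹) := by
    have := congrArg (fun x : ℚ => (x : ℝ)) h
    push_cast at this
    exact this
  rw [h']
  have hw : 1 - sfun q ≤ ∏ p ∈ q.primeFactors, (1 - (p : ℝ)⁻¹) := by
    refine weier _ _ (fun p _ => by positivity) (fun p hp => ?_)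
    have hp1 : 1 ≤ p := (Nat.prime_of_mem_primeFactors hp).one_lt.le
    rw [inv_le_one_iff₀]
    right
    exact_mod_cast hp1
  have hq' : (0:ℝ) ≤ q := by positivity
  nlinarith

/-- telescoping bound -/
lemma tele (n : ℕ) : ∑ d ∈ Icc 3 n, ((d : ℝ)⁻¹ * (d : ℝ)⁻¹) ≤ 2⁻¹ := by
  have key : ∀ n : ℕ, 2 ≤ n → ∑ d ∈ Icc 3 n, (((d : ℝ) - 1)⁻¹ - (d : ℝ)⁻¹) = 2⁻¹ - (n : ℝ)⁻¹ := by
    intro n hn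
    induction n with
    | zero => omega
    | succ k ih =>
      rcases Nat.lt_or_ge k 2 with hk | hk
      · interval_cases k
        · omega
        · norm_num
      · rw [Finset.sum_Icc_succ_top (by omega : 3 ≤ k + 1), ih hk]
        have hk0 : (k : ℝ) ≠ 0 := by positivity
        push_cast
        ring
  rcases Nat.lt_or_ge n 2 with hn | hn
  · interval_cases n <;> norm_num
  · calc ∑ d ∈ Icc 3 n, ((d : ℝ)⁻¹ * (d : ℝ)⁻¹)
        ≤ ∑ d ∈ Icc 3 n, (((d : ℝ) - 1)⁻¹ - (d : ℝ)⁻¹) := by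
          refine Finset.sum_le_sum fun d hd => ?_
          have hd3 : 3 ≤ d := (Finset.mem_Icc.mp hd).1
          have hd' : (3:ℝ) ≤ d := by exact_mod_cast hd3
          have h1 : (0:ℝ) < (d:ℝ) - 1 := by linarith
          have h2 : (0:ℝ) < (d:ℝ) := by linarith
          have heq : ((d:ℝ) - 1)⁻¹ - (d:ℝ)⁻¹ = (((d:ℝ) - 1) * d)⁻¹ := by
            field_simp
            ring
          rw [← mul_inv, heq]
          gcongr
          nlinarith
      _ = 2⁻¹ - (n : ℝ)⁻¹ := key n hn
      _ ≤ 2⁻¹ := by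
          have : (0:ℝ) ≤ (n : ℝ)⁻¹ := by positivity
          linarith


/-- number of multiples -/
lemma card_dvd_Icc (p n : ℕ) : #{q ∈ Icc 1 n | p ∣ q} = n / p := by
  have : {q ∈ Icc 1 n | p ∣ q} = {k ∈ Finset.range (n+1) | k ≠ 0 ∧ p ∣ k} := by
    ext q
    simp only [Finset.mem_filter, Finset.mem_Icc, Finset.mem_range]
    omega
  rw [this]
  exact Nat.card_multiples' n p

/-- the average of sfun is at most 3/4 -/
lemma avg (n : ℕ) : ∑ q ∈ Icc 1 n, sfun q ≤ (3 / 4 : ℝ) * n := by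
  classical
  have step1 : ∑ q ∈ Icc 1 n, sfun q
      = ∑ p ∈ Icc 1 n, ∑ q ∈ Icc 1 n, (if p ∈ q.primeFactors then (p : ℝ)⁻¹ else 0) := by
    rw [Finset.sum_comm]
    refine Finset.sum_congr rfl fun q hq => ?_
    have hsub : q.primeFactors ⊆ Icc 1 n := by
      intro p hp
      have hq' := Finset.mem_Icc.mp hq
      have hple : p ≤ q := Nat.le_of_dvd (by omega) (Nat.dvd_of_mem_primeFactors hp)
      have hp1 : 1 ≤ p := (Nat.prime_of_mem_primeFactors hp).one_lt.le
      exact Finset.mem_Icc.mpr ⟨hp1, le_trans hple hq'.2⟩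
    rw [Finset.sum_ite_mem, Finset.inter_eq_right.mpr hsub]
    rfl
  rw [step1]
  have step2 : ∀ p ∈ Icc 1 n,
      ∑ q ∈ Icc 1 n, (if p ∈ q.primeFactors then (p : ℝ)⁻¹ else 0)
        ≤ (if p.Prime then (n : ℝ) * ((p:ℝ)⁻¹ * (p:ℝ)⁻¹) else 0) := by
    intro p hp
    by_cases hprime : p.Prime
    · simp only [hprime, if_true]
      have hsum : ∑ q ∈ Icc 1 n, (if p ∈ q.primeFactors then (p : ℝ)⁻¹ else 0)
          = (#{q ∈ Icc 1 n | p ∈ q.primeFactors} : ℝ) * (p:ℝ)⁻¹ := by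
        rw [Finset.sum_ite, Finset.sum_const, Finset.sum_const_zero, add_zero,
          nsmul_eq_mul]
      rw [hsum]
      have hcard : #{q ∈ Icc 1 n | p ∈ q.primeFactors} ≤ n / p := by
        rw [← card_dvd_Icc p n]
        exact Finset.card_le_card (Finset.monotone_filter_right _
          (fun q _ hq => Nat.dvd_of_mem_primeFactors hq))
      have h1 : (#{q ∈ Icc 1 n | p ∈ q.primeFactors} : ℝ) ≤ ((n / p : ℕ) : ℝ) := by
        exact_mod_cast hcard
      have h2 : ((n / p : ℕ) : ℝ) ≤ (n : ℝ) / p := Nat.cast_div_le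
      have hp0 : (0:ℝ) < (p:ℝ) := by exact_mod_cast hprime.pos
      calc (#{q ∈ Icc 1 n | p ∈ q.primeFactors} : ℝ) * (p:ℝ)⁻¹
          ≤ ((n : ℝ) / p) * (p:ℝ)⁻¹ := by
            apply mul_le_mul_of_nonneg_right (le_trans h1 h2) (by positivity)
        _ = (n : ℝ) * ((p:ℝ)⁻¹ * (p:ℝ)⁻¹) := by
            field_simp
    · simp only [hprime, if_false]
      apply le_of_eq
      refine Finset.sum_eq_zero fun q hq => ?_
      rw [if_neg]
      intro hmem
      exact hprime (Nat.prime_of_mem_primeFactors hmem)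
  calc ∑ p ∈ Icc 1 n, ∑ q ∈ Icc 1 n, (if p ∈ q.primeFactors then (p : ℝ)⁻¹ else 0)
      ≤ ∑ p ∈ Icc 1 n, (if p.Prime then (n : ℝ) * ((p:ℝ)⁻¹ * (p:ℝ)⁻¹) else 0) :=
        Finset.sum_le_sum step2
    _ = (n : ℝ) * ∑ p ∈ {p ∈ Icc 1 n | p.Prime}, ((p:ℝ)⁻¹ * (p:ℝ)⁻¹) := by
        rw [Finset.sum_filter, Finset.mul_sum]
        refine Finset.sum_congr rfl fun p _ => ?_
        split <;> simp
    _ ≤ (n : ℝ) * (3/4 : ℝ) := by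
        apply mul_le_mul_of_nonneg_left _ (by positivity)
        have hsub : {p ∈ Icc 1 n | p.Prime} ⊆ insert 2 (Icc 3 n) := by
          intro p hp
          obtain ⟨hp1, hp2⟩ := Finset.mem_filter.mp hp
          rcases eq_or_ne p 2 with rfl | hne
          · exact Finset.mem_insert_self _ _
          · refine Finset.mem_insert_of_mem (Finset.mem_Icc.mpr ⟨?_, (Finset.mem_Icc.mp hp1).2⟩)
            have := hp2.two_le
            omega
        calc ∑ p ∈ {p ∈ Icc 1 n | p.Prime}, ((p:ℝ)⁻¹ * (p:ℝ)⁻¹)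
            ≤ ∑ p ∈ insert 2 (Icc 3 n), ((p:ℝ)⁻¹ * (p:ℝ)⁻¹) :=
              Finset.sum_le_sum_of_subset_of_nonneg hsub (fun p _ _ => by positivity)
          _ ≤ (1/4 : ℝ) + 2⁻¹ := by
              rw [Finset.sum_insert (by simp)]
              have := tele n
              norm_num
              linarith
          _ ≤ 3/4 := by norm_num
    _ = (3/4 : ℝ) * n := by ring

/-- counting the good q -/
lemma count (n : ℕ) :
    (n : ℝ) * (10 : ℝ)⁻¹ ≤ (#{q ∈ Icc 1 n | sfun q ≤ 5/6} : ℝ) := by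
  classical
  set G := {q ∈ Icc 1 n | sfun q ≤ 5/6} with hG
  set B := {q ∈ Icc 1 n | ¬ (sfun q ≤ 5/6)} with hB
  have hcards : #G + #B = n := by
    rw [hG, hB, Finset.card_filter_add_card_filter_not, Nat.card_Icc]
    omega
  have hBsum : (5/6 : ℝ) * #B ≤ ∑ q ∈ B, sfun q := by
    calc (5/6 : ℝ) * #B = ∑ _q ∈ B, (5/6 : ℝ) := by rw [Finset.sum_const, nsmul_eq_mul]; ring
      _ ≤ ∑ q ∈ B, sfun q := Finset.sum_le_sum fun q hq => by
          have := (Finset.mem_filter.mp hq).2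
          linarith [not_le.mp this]
  have hBtot : ∑ q ∈ B, sfun q ≤ ∑ q ∈ Icc 1 n, sfun q :=
    Finset.sum_le_sum_of_subset_of_nonneg (Finset.filter_subset _ _)
      (fun q _ _ => sfun_nonneg q)
  have havg := avg n
  have hBbound : (#B : ℝ) ≤ (9/10 : ℝ) * n := by nlinarith
  have hn : (#G : ℝ) + (#B : ℝ) = (n : ℝ) := by exact_mod_cast hcards
  linarith

/-- Abel-type comparison -/
lemma abel (g h : ℕ → ℝ) (c : ℝ) (hg0 : ∀ q, 0 ≤ g q) (hga : Antitone g)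
    (hH : ∀ n, c * n ≤ ∑ q ∈ Icc 1 n, h q) :
    ∀ Q, c * ∑ q ∈ Icc 1 Q, g q + ((∑ q ∈ Icc 1 Q, h q) - c * Q) * g Q
      ≤ ∑ q ∈ Icc 1 Q, h q * g q := by
  intro Q
  induction Q with
  | zero => simp
  | succ Q ih =>
    rw [Finset.sum_Icc_succ_top (by omega : 1 ≤ Q + 1),
      Finset.sum_Icc_succ_top (by omega : 1 ≤ Q + 1),
      Finset.sum_Icc_succ_top (by omega : 1 ≤ Q + 1)]
    have h1 : ((∑ q ∈ Icc 1 Q, h q) - c * Q) * g (Q+1)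
        ≤ ((∑ q ∈ Icc 1 Q, h q) - c * Q) * g Q :=
      mul_le_mul_of_nonneg_left (hga (by omega)) (by linarith [hH Q])
    push_cast
    nlinarith [hH Q, hg0 (Q+1)]

theorem stmt14 :
    ∃ C : ℝ, 0 < C ∧ ∀ ψ : ℕ → ℝ, (∀ q, 0 ≤ ψ q) → Antitone ψ →
      ∀ Q m : ℕ, 1 ≤ Q → 1 ≤ m →
        ∑ q ∈ Finset.Icc 1 Q, ψ q ^ m ≤
          C ^ m * ∑ q ∈ Finset.Icc 1 Q, ((Nat.totient q : ℝ) * ψ q / q) ^ m := by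
  classical
  refine ⟨60, by norm_num, ?_⟩
  intro ψ hψ0 hψa Q m hQ hm
  set g : ℕ → ℝ := fun q => (ψ q * 6⁻¹) ^ m with hg
  set h : ℕ → ℝ := fun q => if sfun q ≤ 5/6 then (1:ℝ) else 0 with hh
  have hg0 : ∀ q, 0 ≤ g q := fun q => pow_nonneg (mul_nonneg (hψ0 q) (by norm_num)) m
  have hga : Antitone g := fun a b hab =>
    pow_le_pow_left₀ (mul_nonneg (hψ0 b) (by norm_num))
      (mul_le_mul_of_nonneg_right (hψa hab) (by norm_num)) m
  have hH : ∀ n, (10:ℝ)⁻¹ * n ≤ ∑ q ∈ Icc 1 n, h q := by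
    intro n
    have hc := count n
    have : ∑ q ∈ Icc 1 n, h q = (#{q ∈ Icc 1 n | sfun q ≤ 5/6} : ℝ) := by
      rw [hh, Finset.sum_boole]
    rw [this]
    linarith [hc]
  have key := abel g h 10⁻¹ hg0 hga hH Q
  have t1 : (10:ℝ)⁻¹ * ∑ q ∈ Icc 1 Q, g q ≤ ∑ q ∈ Icc 1 Q, h q * g q := by
    have h2 : 0 ≤ ((∑ q ∈ Icc 1 Q, h q) - 10⁻¹ * Q) * g Q :=
      mul_nonneg (by linarith [hH Q]) (hg0 Q)
    linarith
  set S := ∑ q ∈ Finset.Icc 1 Q, ((Nat.totient q : ℝ) * ψ q / q) ^ m with hS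
  have hSnn : 0 ≤ S := Finset.sum_nonneg fun q _ =>
    pow_nonneg (div_nonneg (mul_nonneg (Nat.cast_nonneg _) (hψ0 q)) (Nat.cast_nonneg _)) m
  have t2 : ∑ q ∈ Icc 1 Q, h q * g q ≤ S := by
    refine Finset.sum_le_sum fun q hq => ?_
    have hq1 : 1 ≤ q := (Finset.mem_Icc.mp hq).1
    have hq0 : (0:ℝ) < q := by exact_mod_cast hq1
    by_cases hs : sfun q ≤ 5/6
    · simp only [hh, hg, hs, if_true, one_mul]
      apply pow_le_pow_left₀ (mul_nonneg (hψ0 q) (by norm_num))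
      have hφ : (q:ℝ) * 6⁻¹ ≤ (Nat.totient q : ℝ) := by
        have := totient_lb q
        nlinarith
      calc ψ q * 6⁻¹ = ((q:ℝ) * 6⁻¹) * ψ q / q := by field_simp
        _ ≤ (Nat.totient q : ℝ) * ψ q / q := by
            gcongr
            exact hψ0 q
    · simp only [hh, hs, if_false, zero_mul]
      exact pow_nonneg (div_nonneg (mul_nonneg (Nat.cast_nonneg _) (hψ0 q))
        (Nat.cast_nonneg _)) m
  have t3 : ∑ q ∈ Icc 1 Q, ψ q ^ m = 6^m * ∑ q ∈ Icc 1 Q, g q := by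
    rw [Finset.mul_sum]
    refine Finset.sum_congr rfl fun q _ => ?_
    rw [hg, ← mul_pow]
    congr 1
    ring
  have h60 : (6:ℝ)^m * 10 ≤ 60^m := by
    have h1 : (60:ℝ)^m = 6^m * 10^m := by rw [← mul_pow]; norm_num
    have h10 : (10:ℝ) ≤ 10^m := le_self_pow₀ (by norm_num) (by omega)
    nlinarith [pow_nonneg (by norm_num : (0:ℝ) ≤ 6) m]
  calc ∑ q ∈ Icc 1 Q, ψ q ^ m = 6^m * ∑ q ∈ Icc 1 Q, g q := t3
    _ ≤ 6^m * (10 * ∑ q ∈ Icc 1 Q, h q * g q) := by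
        have h6 : (0:ℝ) ≤ 6^m := by positivity
        have : ∑ q ∈ Icc 1 Q, g q ≤ 10 * ∑ q ∈ Icc 1 Q, h q * g q := by linarith
        exact mul_le_mul_of_nonneg_left this h6
    _ ≤ 6^m * (10 * S) := by
        have h6 : (0:ℝ) ≤ 6^m := by positivity
        have : 10 * ∑ q ∈ Icc 1 Q, h q * g q ≤ 10 * S := by linarith
        exact mul_le_mul_of_nonneg_left this h6
    _ = (6^m * 10) * S := by ring
    _ ≤ 60^m * S := mul_le_mul_of_nonneg_right h60 hSnn
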